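/- Let 0 < d₁ < d₂, α > 0, and D = d₂^α / d₁^α. Let |h₁|², |h₂|² be independent Exp(1) random variables, and let O be an event independent of (|h₁|², |h₂|²) with P(O) = p (the event that the estimated distance order is reversed, d̂₁ > d̂₂). Then the decoding order error probability P_e² := P(Oᶜ ∩ {|h₁|² d₁^{−α} < |h₂|² d₂^{−α}}) + P(O ∩ {|h₁|² d₁^{−α} > |h₂|² d₂^{−α}}) satisfies P_e² = ((D−1)/(D+1))·p + 1/(D+1). -/

import Mathlib

open MeasureTheory ProbabilityTheory Real Set
open scoped NNReal ENNReal

lemma myexp_apply (s : Set ℝ) (hs : MeasurableSet s) :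
    expMeasure 1 s = ∫⁻ x in s, exponentialPDF 1 x := by
  rw [expMeasure, gammaMeasure, withDensity_apply _ hs]; rfl

lemma myexp_neg : expMeasure 1 (Iio 0) = 0 := by
  rw [myexp_apply _ measurableSet_Iio]
  exact lintegral_exponentialPDF_of_nonpos le_rfl

lemma myexp_Ioi {x : ℝ} (hx : 0 ≤ x) :
    expMeasure 1 (Ioi x) = ENNReal.ofReal (exp (-x)) := by
  have : IsProbabilityMeasure (expMeasure 1) := isProbabilityMeasure_expMeasure one_pos
  rw [← compl_Iic, measure_compl measurableSet_Iic (measure_ne_top _ _), measure_univ,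
    myexp_apply _ measurableSet_Iic, lintegral_exponentialPDF_eq_antiDeriv one_pos, if_pos hx,
    one_mul]
  rw [← ENNReal.ofReal_one, ← ENNReal.ofReal_sub _ (by nlinarith [exp_le_one_iff.2 (by linarith : -x ≤ 0)])]
  norm_num

lemma measure_lt_mul {c : ℝ} (hc : 0 < c) :
    ((expMeasure 1).prod (expMeasure 1)) {q : ℝ × ℝ | q.1 < c * q.2}
      = ENNReal.ofReal (c / (c + 1)) := by
  have : IsProbabilityMeasure (expMeasure 1) := isProbabilityMeasure_expMeasure one_pos
  have hS : MeasurableSet {q : ℝ × ℝ | q.1 < c * q.2} :=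
    measurableSet_lt measurable_fst (measurable_snd.const_mul c)
  rw [Measure.prod_apply hS]
  have hslice : ∀ x : ℝ, (Prod.mk x ⁻¹' {q : ℝ × ℝ | q.1 < c * q.2}) = Ioi (x / c) := by
    intro x; ext y
    simp only [mem_preimage, mem_setOf_eq, mem_Ioi, div_lt_iff₀ hc, mul_comm]
  simp_rw [hslice]
  have hae : ∀ᵐ x ∂(expMeasure 1), expMeasure 1 (Ioi (x / c)) =
      ENNReal.ofReal (exp (-(x / c))) := by
    refine measure_mono_null (fun x hx => ?_) myexp_neg
    simp only [mem_compl_iff, mem_setOf_eq] at hx ⊢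
    by_contra hx0
    exact hx (myexp_Ioi (div_nonneg (not_lt.1 hx0) hc.le))
  rw [lintegral_congr_ae hae]
  have hf : Measurable (gammaPDF 1 1) := (measurable_gammaPDFReal 1 1).ennreal_ofReal
  have hg : Measurable fun x : ℝ => ENNReal.ofReal (exp (-(x / c))) := by
    fun_prop
  rw [expMeasure, gammaMeasure, lintegral_withDensity_eq_lintegral_mul _ hf hg]
  have hgp : gammaPDF 1 1 = exponentialPDF 1 := rfl
  set b : ℝ := (c + 1) / c with hb
  have hbpos : 0 < b := div_pos (by linarith) hc
  have hpt : (fun x => (gammaPDF 1 1 * fun x => ENNReal.ofReal (exp (-(x / c)))) x)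
      = Set.indicator (Ici 0) (fun x => ENNReal.ofReal (exp (-(b * x)))) := by
    funext x
    simp only [Pi.mul_apply, hgp]
    by_cases hx : (0:ℝ) ≤ x
    · rw [Set.indicator_of_mem (mem_Ici.mpr hx), exponentialPDF_of_nonneg hx, one_mul,
        ← ENNReal.ofReal_mul (exp_nonneg _), ← Real.exp_add]
      congr 2
      have hc0 : c ≠ 0 := hc.ne'
      rw [hb]
      field_simp
      ring
    · rw [Set.indicator_of_notMem (fun h => hx (mem_Ici.mp h)), exponentialPDF_of_neg (not_le.1 hx), zero_mul]
  rw [show (∫⁻ x, (gammaPDF 1 1 * fun x => ENNReal.ofReal (exp (-(x / c)))) x)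
      = ∫⁻ x in Ici 0, ENNReal.ofReal (exp (-(b * x))) by
    rw [← lintegral_indicator measurableSet_Ici]
    exact lintegral_congr fun x => by rw [congrFun hpt x]]
  rw [setLIntegral_congr (Ioi_ae_eq_Ici (a := (0:ℝ))).symm]
  have hint : IntegrableOn (fun x => exp (-(b * x))) (Ioi (0:ℝ)) := by
    simpa [neg_mul] using exp_neg_integrableOn_Ioi 0 hbpos
  rw [← ofReal_integral_eq_lintegral_ofReal hint (ae_of_all _ fun x => exp_nonneg _)]
  have : (∫ x in Ioi (0:ℝ), exp (-(b * x))) = b⁻¹ * exp (-(b * 0)) := by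
    rw [integral_comp_mul_left_Ioi (fun x => exp (-x)) 0 hbpos, integral_exp_neg_Ioi,
      smul_eq_mul]
  rw [this]
  norm_num
  congr 1
  rw [hb]
  field_simp


/-- Corollary 1 (decoding order error probability under Rayleigh fading): for two users at
distances `0 < d₁ < d₂` with independent `Exp(1)` fading powers `|h₁|², |h₂|²`, channel gains
`|hₘ|² dₘ^{-α}`, and an event `O` (disordered distance estimates, `d̂₁ > d̂₂`) of probability `p`
independent of the fading, the decoding order error probability
`P(Oᶜ ∩ {|h₁|² d₁^{-α} < |h₂|² d₂^{-α}}) + P(O ∩ {|h₁|² d₁^{-α} > |h₂|² d₂^{-α}})`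
equals `((D-1)/(D+1)) p + 1/(D+1)` with `D = d₂^α / d₁^α`. -/
theorem decoding_order_error_probability_rayleigh
    {Ω : Type*} [MeasurableSpace Ω] (P : Measure Ω) [IsProbabilityMeasure P]
    (d₁ d₂ α D p : ℝ) (hd₁ : 0 < d₁) (hd : d₁ < d₂) (hα : 0 < α)
    (hD : D = d₂ ^ α / d₁ ^ α)
    (h1sq h2sq : Ω → ℝ) (hm1 : Measurable h1sq) (hm2 : Measurable h2sq)
    (hlaw1 : P.map h1sq = expMeasure 1) (hlaw2 : P.map h2sq = expMeasure 1)
    (hind : IndepFun h1sq h2sq P)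
    (O : Set Ω) (hO : MeasurableSet O) (hp : (P O).toReal = p)
    (hindO : Indep (MeasurableSpace.generateFrom {O})
      (MeasurableSpace.comap (fun ω => (h1sq ω, h2sq ω)) inferInstance) P) :
    (P (Oᶜ ∩ {ω | h1sq ω * d₁ ^ (-α) < h2sq ω * d₂ ^ (-α)})).toReal +
    (P (O ∩ {ω | h2sq ω * d₂ ^ (-α) < h1sq ω * d₁ ^ (-α)})).toReal =
      (D - 1) / (D + 1) * p + 1 / (D + 1) := by
  haveI : IsProbabilityMeasure (expMeasure 1) := isProbabilityMeasure_expMeasure one_pos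
  have ha : (0:ℝ) < d₁ ^ α := rpow_pos_of_pos hd₁ α
  have hb : (0:ℝ) < d₂ ^ α := rpow_pos_of_pos (hd₁.trans hd) α
  have hD1 : 1 < D := by
    rw [hD, one_lt_div ha]
    exact rpow_lt_rpow hd₁.le hd hα
  have hDpos : (0:ℝ) < D := by linarith
  have hkey1 : ∀ x y : ℝ, (x * d₁ ^ (-α) < y * d₂ ^ (-α)) ↔ x < D⁻¹ * y := by
    intro x y
    rw [rpow_neg hd₁.le, rpow_neg (hd₁.trans hd).le, ← div_eq_mul_inv, ← div_eq_mul_inv,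
      div_lt_div_iff₀ ha hb, hD,
      show (d₂ ^ α / d₁ ^ α)⁻¹ * y = y * d₁ ^ α / d₂ ^ α by field_simp,
      lt_div_iff₀ hb]
  have hkey2 : ∀ x y : ℝ, (y * d₂ ^ (-α) < x * d₁ ^ (-α)) ↔ y < D * x := by
    intro x y
    rw [rpow_neg hd₁.le, rpow_neg (hd₁.trans hd).le, ← div_eq_mul_inv, ← div_eq_mul_inv,
      div_lt_div_iff₀ hb ha, hD,
      show d₂ ^ α / d₁ ^ α * x = x * d₂ ^ α / d₁ ^ α by ring,
      lt_div_iff₀ ha]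
  -- joint law
  have hpair : Measurable (fun ω => (h1sq ω, h2sq ω)) := hm1.prodMk hm2
  have hmap := (indepFun_iff_map_prod_eq_prod_map_map hm1.aemeasurable hm2.aemeasurable).mp hind
  rw [hlaw1, hlaw2] at hmap
  set S₁ : Set (ℝ × ℝ) := {q : ℝ × ℝ | q.1 < D⁻¹ * q.2} with hS₁def
  set S₂ : Set (ℝ × ℝ) := {q : ℝ × ℝ | q.2 < D * q.1} with hS₂def
  have hS₁ : MeasurableSet S₁ := measurableSet_lt measurable_fst (measurable_snd.const_mul _)
  have hS₂ : MeasurableSet S₂ := measurableSet_lt measurable_snd (measurable_fst.const_mul _)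
  have hE₁ : {ω | h1sq ω * d₁ ^ (-α) < h2sq ω * d₂ ^ (-α)}
      = (fun ω => (h1sq ω, h2sq ω)) ⁻¹' S₁ := by
    ext ω; exact hkey1 _ _
  have hE₂ : {ω | h2sq ω * d₂ ^ (-α) < h1sq ω * d₁ ^ (-α)}
      = (fun ω => (h1sq ω, h2sq ω)) ⁻¹' S₂ := by
    ext ω; exact hkey2 _ _
  -- measures of S₁, S₂ under product
  have hm₁ : ((expMeasure 1).prod (expMeasure 1)) S₁ = ENNReal.ofReal (1 / (D + 1)) := by
    rw [hS₁def, measure_lt_mul (inv_pos.2 hDpos)]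
    congr 1
    rw [div_eq_div_iff (by positivity) (by positivity)]
    field_simp
    ring
  have hm₂ : ((expMeasure 1).prod (expMeasure 1)) S₂ = ENNReal.ofReal (D / (D + 1)) := by
    have hswap : Prod.swap ⁻¹' S₂ = {q : ℝ × ℝ | q.1 < D * q.2} := by
      ext q; simp [hS₂def]
    calc ((expMeasure 1).prod (expMeasure 1)) S₂
        = (((expMeasure 1).prod (expMeasure 1)).map Prod.swap) S₂ := by
          rw [Measure.prod_swap]
      _ = ((expMeasure 1).prod (expMeasure 1)) (Prod.swap ⁻¹' S₂) := by
          rw [Measure.map_apply measurable_swap hS₂]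
      _ = ENNReal.ofReal (D / (D + 1)) := by rw [hswap, measure_lt_mul hDpos]
  -- probabilities of events
  have hPA : P ((fun ω => (h1sq ω, h2sq ω)) ⁻¹' S₁) = ENNReal.ofReal (1 / (D + 1)) := by
    rw [← Measure.map_apply hpair hS₁, hmap, hm₁]
  have hPB : P ((fun ω => (h1sq ω, h2sq ω)) ⁻¹' S₂) = ENNReal.ofReal (D / (D + 1)) := by
    rw [← Measure.map_apply hpair hS₂, hmap, hm₂]
  -- independence
  have hOg : MeasurableSet[MeasurableSpace.generateFrom {O}] O :=
    MeasurableSpace.measurableSet_generateFrom rfl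
  have hind' := (indep_iff_forall_indepSet P).mp hindO
  have hI₁ : P (Oᶜ ∩ ((fun ω => (h1sq ω, h2sq ω)) ⁻¹' S₁))
      = P Oᶜ * P ((fun ω => (h1sq ω, h2sq ω)) ⁻¹' S₁) :=
    (hind' _ _ hOg.compl ⟨S₁, hS₁, rfl⟩).measure_inter_eq_mul
  have hI₂ : P (O ∩ ((fun ω => (h1sq ω, h2sq ω)) ⁻¹' S₂))
      = P O * P ((fun ω => (h1sq ω, h2sq ω)) ⁻¹' S₂) :=
    (hind' _ _ hOg ⟨S₂, hS₂, rfl⟩).measure_inter_eq_mul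
  rw [hE₁, hE₂, hI₁, hI₂, hPA, hPB]
  have hOc : (P Oᶜ).toReal = 1 - p := by
    rw [measure_compl hO (measure_ne_top _ _), measure_univ,
      ENNReal.toReal_sub_of_le prob_le_one (by simp), ENNReal.toReal_one, hp]
  rw [ENNReal.toReal_mul, ENNReal.toReal_mul, hOc, hp,
    ENNReal.toReal_ofReal (by positivity), ENNReal.toReal_ofReal (by positivity)]
  field_simp
  ring
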